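/- Let p be a real number, and define the polynomials G_n(p) ∈ ℝ[t] by G_0(p) = 1 and G_n(p) = (p/n) Σ_{k=1}^{n} (−1)^{k+1} B_k · G_{n−k}(p) for n ≥ 1, where B_k ∈ ℝ[t] is the k-th Bernoulli polynomial. Then for every n ≥ 1, the derivative (in t) of G_n(p) equals (p + 1 − n) · G_{n−1}(p). -/

import Mathlib

open Finset Polynomial

/-- The `k`-th Bernoulli polynomial as a real polynomial
(generating function `u e^{tu}/(e^u - 1)`, so `bernR 1 = X - 1/2`). -/
noncomputable def bernR (k : ℕ) : Polynomial ℝ :=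
  (Polynomial.bernoulli k).map (algebraMap ℚ ℝ)

lemma bernR_zero : bernR 0 = 1 := by simp [bernR]

lemma derivative_bernR_succ (k : ℕ) :
    Polynomial.derivative (bernR (k + 1)) = C ((k : ℝ) + 1) * bernR k := by
  rw [bernR, Polynomial.derivative_map, Polynomial.derivative_bernoulli_add_one]
  rw [Polynomial.map_mul, bernR]
  simp

/-- the derivative (in `t`) of `Gₙ(p)` equals `(p+1-n) G_{n-1}(p)`. -/
theorem G_derivative
    (p : ℝ)
    (G : ℕ → Polynomial ℝ) (hG0 : G 0 = 1)
    (hG : ∀ n : ℕ, 1 ≤ n →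
      G n = Polynomial.C (p / (n : ℝ)) *
        ∑ k ∈ Finset.Icc 1 n, (-1 : Polynomial ℝ) ^ (k + 1) * bernR k * G (n - k)) :
    ∀ n : ℕ, 1 ≤ n →
      Polynomial.derivative (G n) = Polynomial.C (p + 1 - (n : ℝ)) * G (n - 1) := by
  have hG' : ∀ n : ℕ, 1 ≤ n → G n =
      C (p / (n : ℝ)) * ∑ i ∈ range n, (-1 : Polynomial ℝ) ^ i * bernR (i + 1) * G (n - 1 - i) := by
    intro n hn
    rw [hG n hn, show Finset.Icc 1 n = Finset.Ico 1 (n + 1) by rw [Finset.Ico_add_one_right_eq_Icc],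
      Finset.sum_Ico_eq_sum_range, show n + 1 - 1 = n from rfl]
    congr 1
    apply Finset.sum_congr rfl
    intro i _
    have e1 : 1 + i = i + 1 := by omega
    have e2 : n - (i + 1) = n - 1 - i := by omega
    rw [e1, e2, pow_succ, pow_succ]
    ring
  have key : ∀ m : ℕ,
      C p * ∑ i ∈ range m, (-1 : Polynomial ℝ) ^ i * bernR (i + 1) * G (m - 1 - i)
        = C (m : ℝ) * G m := by
    intro m
    rcases Nat.eq_zero_or_pos m with hm | hm
    · subst hm; simp
    · have hm0 : (m : ℝ) ≠ 0 := Nat.cast_ne_zero.mpr (by omega)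
      rw [hG' m hm, ← mul_assoc, ← C_mul]
      congr 2
      field_simp
  intro n
  induction n using Nat.strong_induction_on with
  | _ n ih =>
  intro hn
  obtain ⟨m, rfl⟩ : ∃ m, n = m + 1 := ⟨n - 1, by omega⟩
  rw [hG' (m + 1) hn, derivative_C_mul, derivative_sum]
  have hterm : ∀ i ∈ range (m + 1),
      Polynomial.derivative ((-1 : Polynomial ℝ) ^ i * bernR (i + 1) * G (m + 1 - 1 - i))
        = (-1 : Polynomial ℝ) ^ i * (C ((i : ℝ) + 1) * bernR i) * G (m - i)
          + (-1 : Polynomial ℝ) ^ i * bernR (i + 1) * Polynomial.derivative (G (m - i)) := by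
    intro i _
    have h1 : (-1 : Polynomial ℝ) ^ i = C ((-1 : ℝ) ^ i) := by simp
    have h2 : m + 1 - 1 - i = m - i := by omega
    rw [h2, derivative_mul, derivative_mul, derivative_bernR_succ, h1, derivative_C]
    ring
  rw [Finset.sum_congr rfl hterm, Finset.sum_add_distrib]
  have hB : ∑ i ∈ range (m + 1),
      (-1 : Polynomial ℝ) ^ i * bernR (i + 1) * Polynomial.derivative (G (m - i))
      = ∑ i ∈ range m, (-1 : Polynomial ℝ) ^ i * bernR (i + 1)
          * (C (p + 1 - ((m : ℝ) - i)) * G (m - 1 - i)) := by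
    rw [Finset.sum_range_succ, Nat.sub_self, hG0, derivative_one, mul_zero, add_zero]
    apply Finset.sum_congr rfl
    intro i hi
    rw [Finset.mem_range] at hi
    have h1 : 1 ≤ m - i := by omega
    have h2 : m - i < m + 1 := by omega
    rw [ih (m - i) h2 h1]
    congr 3
    · push_cast [Nat.cast_sub hi.le]; ring
    · omega
  have hA : ∑ i ∈ range (m + 1),
      (-1 : Polynomial ℝ) ^ i * (C ((i : ℝ) + 1) * bernR i) * G (m - i)
      = (∑ i ∈ range m, (-1 : Polynomial ℝ) ^ (i + 1) * (C ((i : ℝ) + 1 + 1) * bernR (i + 1))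
          * G (m - 1 - i)) + G m := by
    rw [Finset.sum_range_succ']
    simp only [Nat.cast_zero, pow_zero, one_mul, Nat.sub_zero, zero_add, bernR_zero, mul_one]
    congr 1
    · apply Finset.sum_congr rfl
      intro i _
      have h3 : m - (i + 1) = m - 1 - i := by omega
      rw [h3]
      push_cast
      ring
    · simp
  rw [hA, hB]
  have hcomb :
      (∑ i ∈ range m, (-1 : Polynomial ℝ) ^ (i + 1) * (C ((i : ℝ) + 1 + 1) * bernR (i + 1))
          * G (m - 1 - i))
      + ∑ i ∈ range m, (-1 : Polynomial ℝ) ^ i * bernR (i + 1)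
          * (C (p + 1 - ((m : ℝ) - i)) * G (m - 1 - i))
      = C (p - ((m : ℝ) + 1)) *
          ∑ i ∈ range m, (-1 : Polynomial ℝ) ^ i * bernR (i + 1) * G (m - 1 - i) := by
    rw [← Finset.sum_add_distrib, Finset.mul_sum]
    apply Finset.sum_congr rfl
    intro i _
    have h1 : (-1 : Polynomial ℝ) ^ (i + 1) = -(-1 : Polynomial ℝ) ^ i := by rw [pow_succ]; ring
    rw [h1]
    simp only [C_sub, C_add, C_1]
    ring
  have hpq : (C (p / ((m + 1 : ℕ) : ℝ)) : Polynomial ℝ) * C (p - ((m : ℝ) + 1))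
      = C ((p - ((m : ℝ) + 1)) / ((m : ℝ) + 1)) * C p := by
    rw [← C_mul, ← C_mul]
    congr 1
    push_cast
    ring
  have hm0 : ((m : ℝ) + 1) ≠ 0 := by positivity
  rw [add_right_comm, hcomb, mul_add, ← mul_assoc, hpq, mul_assoc, key m,
    Nat.add_sub_cancel, ← mul_assoc, ← C_mul, ← add_mul, ← C_add]
  congr 1
  rw [C_inj]
  push_cast
  field_simp
  ring
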